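/- Let X be a real symmetric n×n positive semidefinite matrix. Then the Hadamard (componentwise) exponential exp_H(X), defined by (exp_H(X))_{ij} = exp(X_{ij}), is completely positive; that is, there exist a natural number k and a matrix U ∈ ℝ^{n×k} with all entries nonnegative such that exp_H(X) = U Uᵀ. -/

import Mathlib

open Matrix

section HadamardExpCPAux

open Set Filter MeasureTheory Real Topology


/-- Convex hull of a compact set in a finite-dimensional normed space is compact. -/
lemma myIsCompact_convexHull {E : Type*} [NormedAddCommGroup E] [NormedSpace ℝ E]
    [FiniteDimensional ℝ E] {T : Set E} (hT : IsCompact T) :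
    IsCompact (convexHull ℝ T) := by
  rcases T.eq_empty_or_nonempty with rfl | ⟨t₀, ht₀⟩
  · simpa using isCompact_empty
  · set D := Module.finrank ℝ E + 1 with hD
    have hΦ : Continuous (fun p : (Fin D → ℝ) × (Fin D → E) => ∑ i, p.1 i • p.2 i) := by
      apply continuous_finset_sum
      intro i _
      exact ((continuous_apply i).comp continuous_fst).smul
        ((continuous_apply i).comp continuous_snd)
    have himage : convexHull ℝ T =
        (fun p : (Fin D → ℝ) × (Fin D → E) => ∑ i, p.1 i • p.2 i) ''
          (stdSimplex ℝ (Fin D) ×ˢ Set.univ.pi fun _ : Fin D => T) := by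
      apply Subset.antisymm
      · intro xx hx
        obtain ⟨ι, hι, z, w, hzT, hindep, hw0, hw1, hxeq⟩ :=
          eq_pos_convex_span_of_mem_convexHull hx
        have hcard : Fintype.card ι ≤ Fintype.card (Fin D) := by
          rw [Fintype.card_fin]
          exact le_trans hindep.card_le_finrank_succ
            (Nat.add_le_add_right (Submodule.finrank_le _) 1)
        obtain ⟨e⟩ : Nonempty (ι ↪ Fin D) := Function.Embedding.nonempty_of_card_le hcard
        classical
        have hoff : ∀ r : Fin D, r ∉ Finset.univ.map e → ¬∃ i, e i = r := by
          intro r hr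
          simpa [Finset.mem_map] using hr
        have hsum : ∀ (f : ι → ℝ) (g : ι → E),
            (∑ r : Fin D, (Function.extend e f 0 r) • (Function.extend e g (fun _ => t₀) r))
              = ∑ i : ι, f i • g i := by
          intro f g
          rw [← Finset.sum_subset (Finset.subset_univ (Finset.univ.map e))]
          · rw [Finset.sum_map]
            congr 1
            ext i
            simp [e.injective.extend_apply]
          · intro r _ hr
            rw [Function.extend_apply' _ _ _ (hoff r hr), Pi.zero_apply, zero_smul]
        refine ⟨⟨Function.extend e w 0, Function.extend e z (fun _ => t₀)⟩, ⟨⟨?_, ?_⟩, ?_⟩, ?_⟩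
        · intro r
          dsimp only
          by_cases h : ∃ i, e i = r
          · obtain ⟨i, rfl⟩ := h
            rw [e.injective.extend_apply]
            exact (hw0 i).le
          · rw [Function.extend_apply' _ _ _ h]; exact le_refl 0
        · dsimp only
          rw [← hw1, ← Finset.sum_subset (Finset.subset_univ (Finset.univ.map e))]
          · rw [Finset.sum_map]
            congr 1
            ext i
            simp [e.injective.extend_apply]
          · intro r _ hr
            rw [Function.extend_apply' _ _ _ (hoff r hr), Pi.zero_apply]
        · intro r _
          dsimp only
          by_cases h : ∃ i, e i = r
          · obtain ⟨i, rfl⟩ := h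
            rw [e.injective.extend_apply]
            exact hzT ⟨i, rfl⟩
          · rw [Function.extend_apply' _ _ _ h]; exact ht₀
        · simpa [hsum w z] using hxeq
      · rintro xx ⟨⟨w, z⟩, ⟨hw, hz⟩, rfl⟩
        exact (convex_convexHull ℝ T).sum_mem (fun i _ => hw.1 i) hw.2
          (fun i _ => subset_convexHull ℝ T (hz i trivial))
    rw [himage]
    exact ((isCompact_stdSimplex _ _).prod (isCompact_univ_pi fun _ => hT)).image hΦ

noncomputable def dfun (z t : ℝ) : ℝ :=
  Real.sqrt (Real.exp (-(z^2)/2) / Real.sqrt (2*π)) * Real.exp (z*t - t^2/2)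

lemma dfun_nonneg (z t : ℝ) : 0 ≤ dfun z t :=
  mul_nonneg (Real.sqrt_nonneg _) (Real.exp_nonneg _)

lemma gauss_int (s : ℝ) :
    ∫ z : ℝ, Real.exp (s*z - z^2/2) = Real.sqrt (2*π) * Real.exp (s^2/2) := by
  have h : ∀ z : ℝ, Real.exp (s*z - z^2/2)
      = Real.exp (s^2/2) * Real.exp (-(2⁻¹:ℝ) * (z - s)^2) := by
    intro z
    rw [← Real.exp_add]
    congr 1
    ring
  simp only [h]
  rw [integral_const_mul]
  rw [integral_sub_right_eq_self (μ := volume) (fun y : ℝ => Real.exp (-(2⁻¹:ℝ) * y^2)) s]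
  rw [integral_gaussian]
  rw [show π / (2⁻¹:ℝ) = 2*π by ring]
  ring

lemma sqrt_two_pi_pos : (0:ℝ) < Real.sqrt (2*π) :=
  Real.sqrt_pos.mpr (by positivity)

lemma dfun_mul (z a b : ℝ) : dfun z a * dfun z b =
    (Real.exp (-((a^2+b^2)/2)) / Real.sqrt (2*π)) * Real.exp ((a+b)*z - z^2/2) := by
  unfold dfun
  have hq : (0:ℝ) ≤ Real.exp (-(z^2)/2) / Real.sqrt (2*π) :=
    div_nonneg (Real.exp_nonneg _) (Real.sqrt_nonneg _)
  calc Real.sqrt (Real.exp (-(z^2)/2) / Real.sqrt (2*π)) * Real.exp (z*a - a^2/2) *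
        (Real.sqrt (Real.exp (-(z^2)/2) / Real.sqrt (2*π)) * Real.exp (z*b - b^2/2))
      = (Real.sqrt (Real.exp (-(z^2)/2) / Real.sqrt (2*π)) *
          Real.sqrt (Real.exp (-(z^2)/2) / Real.sqrt (2*π))) *
          (Real.exp (z*a - a^2/2) * Real.exp (z*b - b^2/2)) := by ring
    _ = (Real.exp (-(z^2)/2) / Real.sqrt (2*π)) *
          (Real.exp (z*a - a^2/2) * Real.exp (z*b - b^2/2)) := by
        rw [Real.mul_self_sqrt hq]
    _ = (Real.exp (-((a^2+b^2)/2)) / Real.sqrt (2*π)) * Real.exp ((a+b)*z - z^2/2) := by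
        rw [div_mul_eq_mul_div, div_mul_eq_mul_div]
        congr 1
        rw [← Real.exp_add, ← Real.exp_add, ← Real.exp_add]
        congr 1
        ring

lemma main_int (a b : ℝ) : ∫ z : ℝ, dfun z a * dfun z b = Real.exp (a*b) := by
  simp only [dfun_mul]
  rw [integral_const_mul, gauss_int]
  have h : ∀ u v : ℝ, v / Real.sqrt (2*π) * (Real.sqrt (2*π) * u) = v * u := by
    intro u v
    field_simp
  rw [h, ← Real.exp_add]
  congr 1
  ring



lemma core_tendsto (t : ℝ) :
    Tendsto (fun z : ℝ => (1+z^2) * Real.exp (2*t*z - z^2/2)) atTop (𝓝 0) := by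
  have h1 : Tendsto (fun u : ℝ => 8 * (u ^ 1 * Real.exp (-u))) atTop (𝓝 0) := by
    simpa using (tendsto_pow_mul_exp_neg_atTop_nhds_zero 1).const_mul (8:ℝ)
  have h2 : Tendsto (fun z : ℝ => z^2/4) atTop atTop :=
    (tendsto_pow_atTop (two_ne_zero)).atTop_div_const (by norm_num)
  have h3 := h1.comp h2
  apply squeeze_zero' (g := fun z : ℝ => 8 * ((z^2/4) ^ 1 * Real.exp (-(z^2/4))))
  · filter_upwards with z
    positivity
  · filter_upwards [eventually_ge_atTop (max 1 (8*|t|))] with z hz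
    have hz1 : (1:ℝ) ≤ z := le_trans (le_max_left _ _) hz
    have hzt : 8*|t| ≤ z := le_trans (le_max_right _ _) hz
    have hb1 : 1 + z^2 ≤ 2*z^2 := by nlinarith
    have hb2 : Real.exp (2*t*z - z^2/2) ≤ Real.exp (-(z^2/4)) := by
      apply Real.exp_le_exp.mpr
      have : 2*t*z ≤ z^2/4 := by
        have h8 : 8*t ≤ z := le_trans (by nlinarith [le_abs_self t]) hzt
        nlinarith
      linarith
    calc (1+z^2) * Real.exp (2*t*z - z^2/2) ≤ 2*z^2 * Real.exp (-(z^2/4)) := by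
          apply mul_le_mul hb1 hb2 (Real.exp_nonneg _) (by positivity)
      _ = 8 * ((z^2/4) ^ 1 * Real.exp (-(z^2/4))) := by ring
  · exact h3

lemma g_eq (t : ℝ) (z : ℝ) : Real.sqrt (1+z^2) * dfun z t =
    Real.sqrt ((Real.sqrt (2*π))⁻¹ * Real.exp (-t^2) * ((1+z^2) * Real.exp (2*t*z - z^2/2))) := by
  unfold dfun
  rw [← mul_assoc, ← Real.sqrt_mul (by positivity)]
  nth_rewrite 1 [show Real.exp (z*t - t^2/2) = Real.sqrt ((Real.exp (z*t - t^2/2))^2) from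
    (Real.sqrt_sq (Real.exp_nonneg _)).symm]
  rw [← Real.sqrt_mul (by positivity)]
  congr 1
  have hexp : Real.exp (-(z^2)/2) * (Real.exp (z*t - t^2/2))^2
      = Real.exp (-t^2) * Real.exp (2*t*z - z^2/2) := by
    rw [pow_two (Real.exp (z*t - t^2/2)), ← Real.exp_add, ← Real.exp_add, ← Real.exp_add]
    congr 1
    ring
  calc (1+z^2) * (Real.exp (-(z^2)/2) / Real.sqrt (2*π)) * (Real.exp (z*t - t^2/2))^2
      = (Real.sqrt (2*π))⁻¹ * ((1+z^2) * (Real.exp (-(z^2)/2) * (Real.exp (z*t - t^2/2))^2)) := by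
        rw [div_eq_mul_inv]; ring
    _ = (Real.sqrt (2*π))⁻¹ * Real.exp (-t^2) * ((1+z^2) * Real.exp (2*t*z - z^2/2)) := by
        rw [hexp]; ring

lemma g_tendsto_top (t : ℝ) :
    Tendsto (fun z : ℝ => Real.sqrt (1+z^2) * dfun z t) atTop (𝓝 0) := by
  simp only [g_eq]
  have hG : Tendsto (fun z : ℝ =>
      (Real.sqrt (2*π))⁻¹ * Real.exp (-t^2) * ((1+z^2) * Real.exp (2*t*z - z^2/2)))
      atTop (𝓝 0) := by
    simpa using (core_tendsto t).const_mul ((Real.sqrt (2*π))⁻¹ * Real.exp (-t^2))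
  have := (Real.continuous_sqrt.tendsto 0).comp hG
  simpa [Function.comp_def] using this

lemma g_tendsto_bot (t : ℝ) :
    Tendsto (fun z : ℝ => Real.sqrt (1+z^2) * dfun z t) atBot (𝓝 0) := by
  have h := (g_tendsto_top (-t)).comp tendsto_neg_atBot_atTop
  have heq : (fun z : ℝ => Real.sqrt (1+z^2) * dfun z t)
      = (fun z : ℝ => Real.sqrt (1+z^2) * dfun z (-t)) ∘ (fun z : ℝ => -z) := by
    funext z
    simp only [Function.comp_apply, neg_sq]
    unfold dfun
    rw [neg_sq]
    congr 2
    ring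
  rw [heq]
  exact h



noncomputable def bfun (c θ : ℝ) : ℝ :=
  if θ ∈ Ioo (-(π/2)) (π/2) then Real.sqrt (1 + Real.tan θ ^ 2) * dfun (Real.tan θ) c else 0

lemma bfun_nonneg (c θ : ℝ) : 0 ≤ bfun c θ := by
  unfold bfun
  split
  · exact mul_nonneg (Real.sqrt_nonneg _)
      (mul_nonneg (Real.sqrt_nonneg _) (Real.exp_nonneg _))
  · exact le_refl 0

lemma gcont (c : ℝ) : Continuous (fun z : ℝ => Real.sqrt (1+z^2) * dfun z c) := by
  unfold dfun
  fun_prop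

lemma bfun_continuousOn (c : ℝ) : ContinuousOn (bfun c) (Icc (-(π/2)) (π/2)) := by
  have hππ : -(π/2) < π/2 := by linarith [pi_pos]
  intro θ₀ hθ₀
  by_cases hmem : θ₀ ∈ Ioo (-(π/2)) (π/2)
  · apply ContinuousAt.continuousWithinAt
    have hta : ContinuousAt Real.tan θ₀ :=
      Real.continuousAt_tan.mpr (Real.cos_pos_of_mem_Ioo hmem).ne'
    have hca : ContinuousAt (fun θ => Real.sqrt (1 + Real.tan θ ^ 2) *
        dfun (Real.tan θ) c) θ₀ := ((gcont c).continuousAt).comp hta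
    apply hca.congr
    filter_upwards [isOpen_Ioo.mem_nhds hmem] with θ hθ
    rw [bfun, if_pos hθ]
  · have hends : θ₀ = -(π/2) ∨ θ₀ = π/2 := by
      rcases hθ₀ with ⟨h1, h2⟩
      rcases h1.eq_or_lt with he | hlt
      · exact Or.inl he.symm
      rcases h2.eq_or_lt with he | hlt2
      · exact Or.inr he
      exact absurd ⟨hlt, hlt2⟩ hmem
    have hb0 : ∀ θ, θ ∉ Ioo (-(π/2)) (π/2) → bfun c θ = 0 := fun θ h => if_neg h
    rcases hends with rfl | rfl
    · -- left endpoint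
      show Tendsto (bfun c) (𝓝[Icc (-(π/2)) (π/2)] (-(π/2))) (𝓝 (bfun c (-(π/2))))
      rw [hb0 _ (fun h => lt_irrefl _ h.1), ← Set.Ioc_insert_left hππ.le, nhdsWithin_insert,
        tendsto_sup]
      constructor
      · simpa [hb0 _ (fun h => lt_irrefl _ h.1)] using
          tendsto_pure_nhds (bfun c) (-(π/2))
      · have hmono : 𝓝[Ioc (-(π/2)) (π/2)] (-(π/2)) ≤ 𝓝[>] (-(π/2)) :=
          nhdsWithin_mono _ Set.Ioc_subset_Ioi_self
        have htan : Tendsto Real.tan (𝓝[Ioc (-(π/2)) (π/2)] (-(π/2))) atBot :=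
          Real.tendsto_tan_neg_pi_div_two.mono_left hmono
        have hcomp := (g_tendsto_bot c).comp htan
        apply hcomp.congr'
        have hIio : Iio (π/2) ∈ 𝓝 (-(π/2)) := isOpen_Iio.mem_nhds hππ
        filter_upwards [eventually_mem_nhdsWithin, mem_nhdsWithin_of_mem_nhds hIio]
          with θ hθ1 hθ2
        have : θ ∈ Ioo (-(π/2)) (π/2) := ⟨hθ1.1, hθ2⟩
        simp only [Function.comp_apply, bfun, if_pos this]
    · -- right endpoint
      show Tendsto (bfun c) (𝓝[Icc (-(π/2)) (π/2)] (π/2)) (𝓝 (bfun c (π/2)))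
      rw [hb0 _ (fun h => lt_irrefl _ h.2), ← Set.Ico_insert_right hππ.le, nhdsWithin_insert,
        tendsto_sup]
      constructor
      · simpa [hb0 _ (fun h => lt_irrefl _ h.2)] using
          tendsto_pure_nhds (bfun c) (π/2)
      · have hmono : 𝓝[Ico (-(π/2)) (π/2)] (π/2) ≤ 𝓝[<] (π/2) :=
          nhdsWithin_mono _ Set.Ico_subset_Iio_self
        have htan : Tendsto Real.tan (𝓝[Ico (-(π/2)) (π/2)] (π/2)) atTop :=
          Real.tendsto_tan_pi_div_two.mono_left hmono
        have hcomp := (g_tendsto_top c).comp htan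
        apply hcomp.congr'
        have hIoi : Ioi (-(π/2)) ∈ 𝓝 (π/2) := isOpen_Ioi.mem_nhds hππ
        filter_upwards [eventually_mem_nhdsWithin, mem_nhdsWithin_of_mem_nhds hIoi]
          with θ hθ1 hθ2
        have : θ ∈ Ioo (-(π/2)) (π/2) := ⟨hθ2, hθ1.2⟩
        simp only [Function.comp_apply, bfun, if_pos this]

lemma bfun_integral (a b : ℝ) :
    ∫ θ in Icc (-(π/2)) (π/2), bfun a θ * bfun b θ = Real.exp (a*b) := by
  have hderiv : ∀ θ ∈ Ioo (-(π/2)) (π/2),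
      HasDerivWithinAt Real.tan (1 + Real.tan θ ^ 2) (Ioo (-(π/2)) (π/2)) θ := by
    intro θ hθ
    have hc := (Real.cos_pos_of_mem_Ioo hθ).ne'
    have h := (Real.hasDerivAt_tan hc).hasDerivWithinAt (s := Ioo (-(π/2)) (π/2))
    rwa [show 1 / Real.cos θ ^ 2 = 1 + Real.tan θ ^ 2 by
      rw [one_div, ← Real.inv_one_add_tan_sq hc, inv_inv]] at h
  calc ∫ θ in Icc (-(π/2)) (π/2), bfun a θ * bfun b θ
      = ∫ θ in Ioo (-(π/2)) (π/2), bfun a θ * bfun b θ := integral_Icc_eq_integral_Ioo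
    _ = ∫ θ in Ioo (-(π/2)) (π/2),
        |1 + Real.tan θ ^ 2| • ((fun z => dfun z a * dfun z b) (Real.tan θ)) := by
        apply setIntegral_congr_fun measurableSet_Ioo
        intro θ hθ
        have hc : (0:ℝ) ≤ 1 + Real.tan θ ^ 2 := by positivity
        simp only [bfun, if_pos hθ, smul_eq_mul, abs_of_nonneg hc]
        calc (Real.sqrt (1 + Real.tan θ ^ 2) * dfun (Real.tan θ) a) *
              (Real.sqrt (1 + Real.tan θ ^ 2) * dfun (Real.tan θ) b)
            = (Real.sqrt (1 + Real.tan θ ^ 2) * Real.sqrt (1 + Real.tan θ ^ 2)) *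
              (dfun (Real.tan θ) a * dfun (Real.tan θ) b) := by ring
          _ = (1 + Real.tan θ ^ 2) * (dfun (Real.tan θ) a * dfun (Real.tan θ) b) := by
              rw [Real.mul_self_sqrt hc]
    _ = ∫ z in Real.tan '' Ioo (-(π/2)) (π/2), dfun z a * dfun z b :=
        (integral_image_eq_integral_abs_deriv_smul measurableSet_Ioo hderiv
          Real.injOn_tan (fun z => dfun z a * dfun z b)).symm
    _ = ∫ z : ℝ, dfun z a * dfun z b := by rw [Real.image_tan_Ioo, setIntegral_univ]
    _ = Real.exp (a*b) := main_int a b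

lemma rank_one (n : ℕ) (x : Fin n → ℝ) :
    ∃ (k : ℕ) (U : Matrix (Fin n) (Fin k) ℝ), (∀ i j, 0 ≤ U i j) ∧
      ∀ i j, Real.exp (x i * x j) = ∑ t, U i t * U j t := by
  classical
  set Ic : Set ℝ := Icc (-(π/2)) (π/2) with hIc
  set F : ℝ → (Fin n → Fin n → ℝ) := fun θ i j => bfun (x i) θ * bfun (x j) θ with hFdef
  have hFc : ContinuousOn F Ic := by
    apply continuousOn_pi.mpr
    intro i
    apply continuousOn_pi.mpr
    intro j
    exact (bfun_continuousOn (x i)).mul (bfun_continuousOn (x j))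
  have hπ0 : (0:ℝ) < π := pi_pos
  set T : Set (Fin n → Fin n → ℝ) := F '' Ic with hTdef
  have hTcp : IsCompact T := isCompact_Icc.image_of_continuousOn hFc
  set μ : Measure ℝ := (ENNReal.ofReal π)⁻¹ • volume.restrict Ic with hμdef
  have hofRπ : ENNReal.ofReal π ≠ 0 := by
    simp only [ne_eq, ENNReal.ofReal_eq_zero, not_le]
    exact hπ0
  have hprob : IsProbabilityMeasure μ := by
    constructor
    rw [hμdef, Measure.smul_apply, Measure.restrict_apply MeasurableSet.univ, Set.univ_inter,
      hIc, Real.volume_Icc, show π/2 - -(π/2) = π by ring, smul_eq_mul]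
    exact ENNReal.inv_mul_cancel hofRπ ENNReal.ofReal_ne_top
  have hFIcc : IntegrableOn F Ic volume := hFc.integrableOn_compact isCompact_Icc
  have hFint : Integrable F μ := by
    rw [hμdef]
    exact hFIcc.smul_measure (ENNReal.inv_ne_top.mpr hofRπ)
  have hmemae : ∀ᵐ θ ∂μ, F θ ∈ convexHull ℝ T := by
    have h1 : ∀ᵐ θ ∂(volume.restrict Ic), F θ ∈ convexHull ℝ T :=
      (ae_restrict_mem measurableSet_Icc).mono
        (fun θ hθ => subset_convexHull ℝ T (Set.mem_image_of_mem F hθ))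
    exact MeasureTheory.Measure.ae_smul_measure h1 _
  have hmem := (convex_convexHull ℝ T).integral_mem (myIsCompact_convexHull hTcp).isClosed
    hmemae hFint
  have hval : (∫ θ, F θ ∂μ) = fun i j => π⁻¹ * Real.exp (x i * x j) := by
    rw [hμdef, integral_smul_measure, ENNReal.toReal_inv, ENNReal.toReal_ofReal hπ0.le]
    funext i j
    rw [Pi.smul_apply, Pi.smul_apply, smul_eq_mul]
    congr 1
    have hint_i : Integrable (fun θ => F θ i) (volume.restrict Ic) := by
      have : ContinuousOn (fun θ => F θ i) Ic := continuousOn_pi.mp hFc i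
      exact this.integrableOn_compact isCompact_Icc
    have h1 := (ContinuousLinearMap.proj (R := ℝ) (φ := fun _ : Fin n => (Fin n → ℝ))
      i).integral_comp_comm hFIcc
    have h2 := (ContinuousLinearMap.proj (R := ℝ) (φ := fun _ : Fin n => ℝ)
      j).integral_comp_comm hint_i
    simp only [ContinuousLinearMap.proj_apply] at h1 h2
    calc (∫ θ, F θ ∂(volume.restrict Ic)) i j
        = (∫ θ, F θ i ∂(volume.restrict Ic)) j := by rw [← h1]
      _ = ∫ θ, F θ i j ∂(volume.restrict Ic) := by rw [← h2]
      _ = Real.exp (x i * x j) := bfun_integral (x i) (x j)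
  rw [hval] at hmem
  rw [convexHull_eq] at hmem
  obtain ⟨ι, t, w, zf, hw0, hw1, hzT, hcm⟩ := hmem
  rw [Finset.centerMass_eq_of_sum_1 _ _ hw1] at hcm
  set θsel : ι → ℝ := fun l => if h : ∃ θ, θ ∈ Ic ∧ F θ = zf l then h.choose else 0 with hθdef
  have hθsel : ∀ l ∈ t, F (θsel l) = zf l := by
    intro l hl
    have h : ∃ θ, θ ∈ Ic ∧ F θ = zf l := by
      have := hzT l hl
      rwa [hTdef, Set.mem_image] at this
    rw [hθdef]
    simp only [dif_pos h]
    exact h.choose_spec.2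
  set e := t.equivFin with hedef
  refine ⟨t.card, fun i r => Real.sqrt (π * w (e.symm r)) * bfun (x i) (θsel (e.symm r)), ?_, ?_⟩
  · intro i r
    exact mul_nonneg (Real.sqrt_nonneg _) (bfun_nonneg _ _)
  · intro i j
    have hM : Real.exp (x i * x j) = ∑ l ∈ t, (π * w l) * (bfun (x i) (θsel l) *
        bfun (x j) (θsel l)) := by
      have hc := congrFun (congrFun hcm i) j
      rw [Finset.sum_apply, Finset.sum_apply] at hc
      have hterm : ∀ l ∈ t, (w l • zf l) i j = w l * (bfun (x i) (θsel l) *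
          bfun (x j) (θsel l)) := by
        intro l hl
        rw [← hθsel l hl]
        rfl
      rw [Finset.sum_congr rfl hterm] at hc
      have : Real.exp (x i * x j) = π * (π⁻¹ * Real.exp (x i * x j)) := by
        field_simp
      rw [this, ← hc, Finset.mul_sum]
      apply Finset.sum_congr rfl
      intro l hl
      ring
    rw [hM]
    have hterm2 : ∀ r : Fin t.card,
        (Real.sqrt (π * w (e.symm r)) * bfun (x i) (θsel (e.symm r))) *
        (Real.sqrt (π * w (e.symm r)) * bfun (x j) (θsel (e.symm r)))
        = (π * w (e.symm r)) * (bfun (x i) (θsel (e.symm r)) *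
            bfun (x j) (θsel (e.symm r))) := by
      intro r
      have hwnn : (0:ℝ) ≤ π * w (e.symm r) :=
        mul_nonneg hπ0.le (hw0 _ (e.symm r).2)
      calc (Real.sqrt (π * w (e.symm r)) * bfun (x i) (θsel (e.symm r))) *
            (Real.sqrt (π * w (e.symm r)) * bfun (x j) (θsel (e.symm r)))
          = (Real.sqrt (π * w (e.symm r)) * Real.sqrt (π * w (e.symm r))) *
            (bfun (x i) (θsel (e.symm r)) * bfun (x j) (θsel (e.symm r))) := by ring
        _ = (π * w (e.symm r)) * (bfun (x i) (θsel (e.symm r)) *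
            bfun (x j) (θsel (e.symm r))) := by rw [Real.mul_self_sqrt hwnn]
    simp only [hterm2]
    rw [Equiv.sum_comp e.symm (fun l : ↥t => (π * w l) * (bfun (x i) (θsel l) *
      bfun (x j) (θsel l)))]
    exact (Finset.sum_coe_sort t _).symm

end HadamardExpCPAux

open Set Filter MeasureTheory Real Topology in
/-- If `X` is a real symmetric positive semidefinite matrix, then its Hadamard
(componentwise) exponential is completely positive. -/
theorem hadamard_exp_completelyPositive (n : ℕ) (X : Matrix (Fin n) (Fin n) ℝ)
    (hX : X.PosSemidef) :
    ∃ (k : ℕ) (U : Matrix (Fin n) (Fin k) ℝ),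
      (∀ i j, 0 ≤ U i j) ∧ Matrix.of (fun i j => Real.exp (X i j)) = U * Uᵀ := by
  classical
  obtain ⟨B, hB⟩ : ∃ B : Matrix (Fin n) (Fin n) ℝ, X = Bᴴ * B := by
    open scoped MatrixOrder in exact CStarAlgebra.nonneg_iff_eq_star_mul_self.mp hX.nonneg
  have hXij : ∀ i j, X i j = ∑ a, B a i * B a j := by
    intro i j
    rw [hB, Matrix.mul_apply]
    simp [Matrix.transpose_apply]
  have H : ∀ a : Fin n, ∃ (k : ℕ) (U : Matrix (Fin n) (Fin k) ℝ), (∀ i j, 0 ≤ U i j) ∧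
      ∀ i j, Real.exp (B a i * B a j) = ∑ t, U i t * U j t :=
    fun a => rank_one n (fun i => B a i)
  choose kk UU hUnn hUeq using H
  set I := (∀ a : Fin n, Fin (kk a)) with hIdef
  set e := Fintype.equivFin I with hedef
  refine ⟨Fintype.card I, fun i r => ∏ a, UU a i (e.symm r a), ?_, ?_⟩
  · intro i r
    exact Finset.prod_nonneg fun a _ => hUnn a i (e.symm r a)
  · ext i j
    erw [Matrix.mul_apply]
    simp only [Matrix.of_apply, Matrix.transpose_apply]
    calc Real.exp (X i j) = Real.exp (∑ a, B a i * B a j) := by rw [hXij]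
      _ = ∏ a, Real.exp (B a i * B a j) := Real.exp_sum _ _
      _ = ∏ a, ∑ s, UU a i s * UU a j s := by
          exact Finset.prod_congr rfl fun a _ => hUeq a i j
      _ = ∑ p ∈ Fintype.piFinset (fun a : Fin n => (Finset.univ : Finset (Fin (kk a)))),
            ∏ a, UU a i (p a) * UU a j (p a) := by
          rw [Finset.prod_univ_sum]
      _ = ∑ p : I, ∏ a, UU a i (p a) * UU a j (p a) := by
          rw [Fintype.piFinset_univ]
      _ = ∑ r : Fin (Fintype.card I), ∏ a, UU a i (e.symm r a) * UU a j (e.symm r a) := by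
          rw [← Equiv.sum_comp e.symm (fun p : I => ∏ a, UU a i (p a) * UU a j (p a))]
      _ = ∑ r : Fin (Fintype.card I),
            (∏ a, UU a i (e.symm r a)) * ∏ a, UU a j (e.symm r a) := by
          apply Finset.sum_congr rfl
          intro r _
          rw [Finset.prod_mul_distrib]
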